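/- arXiv:1304.2452 — 4 statements merged into one kernel-verified Lean document; each statement's English description precedes it below -/
import Mathlib

section
/- Let σ be a connection on B(H)⁺, where H is a complex Hilbert space. Then for every positive invertible operator C on H and all positive operators A, B on H, C σ(A,B) C = σ(CAC, CBC). In particular, for positive invertible A, σ(A,B) = A^{1/2} σ(I, A^{-1/2} B A^{-1/2}) A^{1/2}. -/
open scoped NNReal

/-- `A n ↓ L`: a decreasing sequence of operators converging to `L` in the
strong operator topology. -/
def DownTo {H : Type} [NormedAddCommGroup H] [InnerProductSpace ℂ H] [CompleteSpace H]
    (A : ℕ → H →L[ℂ] H) (L : H →L[ℂ] H) : Prop :=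
  (∀ n, A (n + 1) ≤ A n) ∧ ∀ x : H, Filter.Tendsto (fun n => A n x) Filter.atTop (nhds (L x))

/-- A Kubo-Ando connection on the positive cone of `B(H)` (with respect to the
Loewner order), given as a total binary operation preserving positivity and
satisfying monotonicity, the transformer inequality and continuity from above. -/
structure IsConnection {H : Type} [NormedAddCommGroup H] [InnerProductSpace ℂ H]
    [CompleteSpace H] (σ : (H →L[ℂ] H) → (H →L[ℂ] H) → (H →L[ℂ] H)) : Prop where
  isPositive : ∀ A B : H →L[ℂ] H, A.IsPositive → B.IsPositive → (σ A B).IsPositive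
  mono : ∀ A B C D : H →L[ℂ] H, A.IsPositive → B.IsPositive → C.IsPositive → D.IsPositive →
    A ≤ C → B ≤ D → σ A B ≤ σ C D
  transformer : ∀ A B C : H →L[ℂ] H, A.IsPositive → B.IsPositive → C.IsPositive →
    C * σ A B * C ≤ σ (C * A * C) (C * B * C)
  contAbove : ∀ (A B : ℕ → H →L[ℂ] H) (A₀ B₀ : H →L[ℂ] H),
    (∀ n, (A n).IsPositive) → (∀ n, (B n).IsPositive) → A₀.IsPositive → B₀.IsPositive →
    DownTo A A₀ → DownTo B B₀ → DownTo (fun n => σ (A n) (B n)) (σ A₀ B₀)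

/-- The norm of a connection:
`‖σ‖ = sup {‖A σ B‖ : A, B positive with ‖A‖ = ‖B‖ = 1}`. -/
noncomputable def connNorm {H : Type} [NormedAddCommGroup H] [InnerProductSpace ℂ H]
    [CompleteSpace H] (σ : (H →L[ℂ] H) → (H →L[ℂ] H) → (H →L[ℂ] H)) : ℝ :=
  sSup {r : ℝ | ∃ A B : H →L[ℂ] H, A.IsPositive ∧ B.IsPositive ∧
    ‖A‖ = 1 ∧ ‖B‖ = 1 ∧ r = ‖σ A B‖}

/-- A function `f : [0,∞) → [0,∞)` is operator monotone if for every complex Hilbert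
space `K` and all selfadjoint bounded operators `A ≤ B` on `K` with spectra contained in
`[0,∞)`, one has `f(A) ≤ f(B)` (computed via the continuous functional calculus). -/
def IsOperatorMonotoneNN (f : ℝ≥0 → ℝ≥0) : Prop :=
  ∀ (K : Type) [NormedAddCommGroup K] [InnerProductSpace ℂ K] [CompleteSpace K],
    ∀ A B : K →L[ℂ] K, IsSelfAdjoint A → IsSelfAdjoint B →
      spectrum ℝ A ⊆ Set.Ici (0 : ℝ) → spectrum ℝ B ⊆ Set.Ici (0 : ℝ) → A ≤ B →
      cfc (fun x : ℝ => (f x.toNNReal : ℝ)) A ≤ cfc (fun x : ℝ => (f x.toNNReal : ℝ)) B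

variable {H : Type} [NormedAddCommGroup H] [InnerProductSpace ℂ H] [CompleteSpace H]

/-- The inverse of a positive invertible operator is positive. -/
lemma inverse_isPositive {H : Type} [NormedAddCommGroup H] [InnerProductSpace ℂ H]
    [CompleteSpace H] {C : H →L[ℂ] H} (hC : C.IsPositive) (hCu : IsUnit C) :
    (Ring.inverse C).IsPositive := by
  have hstar : star (Ring.inverse C) = Ring.inverse C := by
    rw [← Ring.inverse_star, hC.isSelfAdjoint.star_eq]
  rw [← ContinuousLinearMap.nonneg_iff_isPositive]
  have h0 : (0 : H →L[ℂ] H) ≤ C := (ContinuousLinearMap.nonneg_iff_isPositive C).mpr hC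
  have := star_left_conjugate_nonneg h0 (Ring.inverse C)
  rwa [hstar, Ring.inverse_mul_cancel C hCu, one_mul] at this

/-- Conjugation by a positive C preserves positivity. -/
lemma conj_isPositive {H : Type} [NormedAddCommGroup H] [InnerProductSpace ℂ H]
    [CompleteSpace H] {A C : H →L[ℂ] H} (hA : A.IsPositive) (hC : C.IsPositive) :
    (C * A * C).IsPositive := by
  rw [← ContinuousLinearMap.nonneg_iff_isPositive]
  have := star_left_conjugate_nonneg ((ContinuousLinearMap.nonneg_iff_isPositive A).mpr hA) C
  rwa [hC.isSelfAdjoint.star_eq] at this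

/-- for positive invertible `C`, `C σ(A,B) C = σ(CAC, CBC)`; in particular,
for positive invertible `A` with positive square root `S` (`S * S = A`),
`σ(A,B) = A^{1/2} σ(I, A^{-1/2} B A^{-1/2}) A^{1/2}`. -/
theorem stmt_7 (σ : (H →L[ℂ] H) → (H →L[ℂ] H) → (H →L[ℂ] H))
    (hσ : IsConnection σ) :
    (∀ C : H →L[ℂ] H, C.IsPositive → IsUnit C →
      ∀ A B : H →L[ℂ] H, A.IsPositive → B.IsPositive →
        C * σ A B * C = σ (C * A * C) (C * B * C)) ∧
    (∀ A B : H →L[ℂ] H, A.IsPositive → IsUnit A → B.IsPositive →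
      ∀ S : H →L[ℂ] H, S.IsPositive → S * S = A →
        σ A B = S * σ 1 (Ring.inverse S * B * Ring.inverse S) * S) := by
  have part1 : ∀ C : H →L[ℂ] H, C.IsPositive → IsUnit C →
      ∀ A B : H →L[ℂ] H, A.IsPositive → B.IsPositive →
        C * σ A B * C = σ (C * A * C) (C * B * C) := by
    intro C hC hCu A B hA hB
    set D := Ring.inverse C with hD
    have hDC : D * C = 1 := Ring.inverse_mul_cancel C hCu
    have hCD : C * D = 1 := Ring.mul_inverse_cancel C hCu
    have hDpos := inverse_isPositive hC hCu
    have h1 : C * σ A B * C ≤ σ (C * A * C) (C * B * C) :=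
      hσ.transformer A B C hA hB hC
    have h2 : D * σ (C * A * C) (C * B * C) * D ≤ σ (D * (C * A * C) * D) (D * (C * B * C) * D) :=
      hσ.transformer _ _ D (conj_isPositive hA hC) (conj_isPositive hB hC) hDpos
    have hAA : D * (C * A * C) * D = A := by
      rw [← mul_assoc, ← mul_assoc, hDC, one_mul, mul_assoc, hCD, mul_one]
    have hBB : D * (C * B * C) * D = B := by
      rw [← mul_assoc, ← mul_assoc, hDC, one_mul, mul_assoc, hCD, mul_one]
    rw [hAA, hBB] at h2
    have h3 := star_left_conjugate_le_conjugate h2 C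
    rw [hC.isSelfAdjoint.star_eq] at h3
    have hback : C * (D * σ (C * A * C) (C * B * C) * D) * C = σ (C * A * C) (C * B * C) := by
      rw [← mul_assoc, ← mul_assoc, hCD, one_mul, mul_assoc, hDC, mul_one]
    rw [hback] at h3
    exact le_antisymm h1 h3
  refine ⟨part1, ?_⟩
  intro A B hA hAu hB S hS hSS
  have hSu : IsUnit S := by
    have hcomm : Commute S A := by
      rw [← hSS]; exact (Commute.refl S).mul_right (Commute.refl S)
    refine isUnit_iff_exists.mpr ⟨Ring.inverse A * S, ?_, ?_⟩
    · have hc : S * Ring.inverse A = Ring.inverse A * S := by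
        have h := congrArg (fun X => Ring.inverse A * X * Ring.inverse A) hcomm.eq
        simp only [← mul_assoc] at h
        rw [Ring.inverse_mul_cancel A hAu, one_mul] at h
        rw [mul_assoc, mul_assoc, Ring.mul_inverse_cancel A hAu, mul_one] at h
        exact h.symm
      rw [← mul_assoc, hc, mul_assoc, hSS, Ring.inverse_mul_cancel A hAu]
    · rw [mul_assoc, hSS, Ring.inverse_mul_cancel A hAu]
  set T := Ring.inverse S with hT
  have hTpos := inverse_isPositive hS hSu
  have hTS : T * S = 1 := Ring.inverse_mul_cancel S hSu
  have hST : S * T = 1 := Ring.mul_inverse_cancel S hSu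
  have key := part1 T hTpos hSu.ringInverse A B hA hB
  have hTA : T * A * T = 1 := by
    rw [← hSS, ← mul_assoc, mul_assoc T S S, ← mul_assoc T S, hTS, one_mul, hST]
  rw [hTA] at key
  have := congrArg (fun X => S * X * S) key
  beta_reduce at this
  rw [← mul_assoc, ← mul_assoc, hST, one_mul, mul_assoc (σ A B), hTS, mul_one] at this
  exact this
end

section
/- Let f : [0,∞) → [0,∞) be a continuous operator monotone function with f(1) = 0. Then f(x) = 0 for all x ≥ 0. -/
open scoped NNReal

variable {H : Type} [NormedAddCommGroup H] [InnerProductSpace ℂ H] [CompleteSpace H]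

set_option maxHeartbeats 1000000
set_option synthInstance.maxHeartbeats 400000

section Aux

variable {K : Type} [NormedAddCommGroup K] [InnerProductSpace ℂ K] [CompleteSpace K]

noncomputable def rkProj (v : K) : K →L[ℂ] K := (innerSL ℂ v).smulRight v

omit [CompleteSpace K] in
lemma rkProj_apply (v w : K) : rkProj v w = (inner ℂ v w : ℂ) • v := rfl

omit [CompleteSpace K] in
lemma rkProj_idem (v : K) (hv : (inner ℂ v v : ℂ) = 1) : rkProj v * rkProj v = rkProj v := by
  ext w
  simp only [ContinuousLinearMap.mul_apply, rkProj_apply, inner_smul_right, hv, mul_one]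

lemma rkProj_sa (v : K) : IsSelfAdjoint (rkProj v) := by
  rw [ContinuousLinearMap.isSelfAdjoint_iff_isSymmetric]
  intro x y
  change (inner ℂ (rkProj v x) y : ℂ) = inner ℂ x (rkProj v y)
  rw [rkProj_apply, rkProj_apply, inner_smul_left, inner_smul_right, ← inner_conj_symm v x]
  simp [mul_comm]

lemma sa_smul (r : ℝ) (P : K →L[ℂ] K) (hP : IsSelfAdjoint P) : IsSelfAdjoint (r • P) := by
  rw [ContinuousLinearMap.isSelfAdjoint_iff_isSymmetric] at hP ⊢
  intro x y
  change (inner ℂ ((r • P) x) y : ℂ) = inner ℂ x ((r • P) y)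
  simp only [ContinuousLinearMap.smul_apply]
  rw [RCLike.real_smul_eq_coe_smul (K := ℂ), RCLike.real_smul_eq_coe_smul (K := ℂ),
    inner_smul_left, inner_smul_right, RCLike.conj_ofReal]
  exact congrArg _ (hP x y)

lemma sa_comb (r t : ℝ) (P : K →L[ℂ] K) (hP : IsSelfAdjoint P) :
    IsSelfAdjoint (r • P + t • (1 : K →L[ℂ] K)) :=
  (sa_smul r P hP).add (sa_smul t 1 (IsSelfAdjoint.one _))

lemma proj_spectrum (P : K →L[ℂ] K) (hidem : P * P = P) :
    spectrum ℝ P ⊆ {0, 1} := by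
  intro t ht
  by_contra hmem
  simp only [Set.mem_insert_iff, Set.mem_singleton_iff, not_or] at hmem
  obtain ⟨ht0, ht1⟩ := hmem
  rw [spectrum.mem_iff] at ht
  apply ht
  set u : K →L[ℂ] K := algebraMap ℝ _ t - P with hu
  set v : K →L[ℂ] K := t⁻¹ • 1 + (t * (t-1))⁻¹ • P with hv
  have hne : t * t - t ≠ 0 := by
    intro h
    apply ht1
    have : t * (t - 1) = 0 := by ring_nf; linarith [h]
    rcases mul_eq_zero.mp this with h' | h'
    · exact absurd h' ht0
    · linarith
  have key : u * v = 1 ∧ v * u = 1 := by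
    constructor <;>
    · rw [hu, hv, Algebra.algebraMap_eq_smul_one]
      simp only [mul_add, add_mul, sub_mul, mul_sub, smul_mul_assoc, mul_smul_comm,
        one_mul, mul_one, hidem]
      match_scalars <;> field_simp <;> ring
  exact ⟨⟨u, v, key.1, key.2⟩, rfl⟩

lemma cfc_affine (α β : ℝ) (P : K →L[ℂ] K) (hP : IsSelfAdjoint P) :
    cfc (fun t : ℝ => (α - β) * t + β) P = (α - β) • P + β • 1 := by
  rw [cfc_add _ _ _ (by fun_prop) (by fun_prop), cfc_const_mul _ _ _ (by fun_prop),
    cfc_id' ℝ P, cfc_const β P]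
  rw [Algebra.algebraMap_eq_smul_one]

lemma cfc_two_point (α β : ℝ) (P : K →L[ℂ] K) (hP : IsSelfAdjoint P)
    (hidem : P * P = P) (g : ℝ → ℝ) (hg : Continuous g) :
    cfc g ((α - β) • P + β • 1) = (g α - g β) • P + g β • 1 := by
  have hspec := proj_spectrum P hidem
  have h1 : (α - β) • P + β • 1 = cfc (fun t : ℝ => (α - β) * t + β) P := by
    rw [cfc_affine α β P hP]
  rw [h1, ← cfc_comp g _ P hP (by fun_prop) (by fun_prop)]
  have h2 : cfc (g ∘ fun t : ℝ => (α - β) * t + β) P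
      = cfc (fun t : ℝ => (g α - g β) * t + g β) P := by
    apply cfc_congr
    intro t ht
    rcases hspec ht with h | h <;> simp_all
  rw [h2, cfc_affine _ _ P hP]

end Aux

section Mono

lemma alg_eq (x : ℝ) : algebraMap ℝ (ℂ →L[ℂ] ℂ) x = (x : ℂ) • 1 := by
  rw [IsScalarTower.algebraMap_apply ℝ ℂ (ℂ →L[ℂ] ℂ), Algebra.algebraMap_eq_smul_one]
  rfl

lemma sa_algebraMap (x : ℝ) : IsSelfAdjoint (algebraMap ℝ (ℂ →L[ℂ] ℂ) x) := by
  rw [alg_eq, IsSelfAdjoint, star_smul, star_one]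
  simp

lemma alg_le (x y : ℝ) (h : x ≤ y) :
    algebraMap ℝ (ℂ →L[ℂ] ℂ) x ≤ algebraMap ℝ (ℂ →L[ℂ] ℂ) y := by
  rw [ContinuousLinearMap.le_def, ← map_sub]
  refine ⟨ContinuousLinearMap.isSelfAdjoint_iff_isSymmetric.mp (sa_algebraMap _), fun w => ?_⟩
  rw [ContinuousLinearMap.reApplyInnerSelf, alg_eq]
  simp only [ContinuousLinearMap.smul_apply, ContinuousLinearMap.one_apply,
    inner_smul_left, Complex.conj_ofReal, RCLike.re_to_complex]
  rw [Complex.re_ofReal_mul]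
  have : 0 ≤ (inner ℂ w w : ℂ).re := by
    have := inner_self_nonneg (𝕜 := ℂ) (x := w); simpa [RCLike.re_to_complex] using this
  nlinarith

lemma alg_le_iff (x y : ℝ) (h : algebraMap ℝ (ℂ →L[ℂ] ℂ) x ≤ algebraMap ℝ (ℂ →L[ℂ] ℂ) y) :
    x ≤ y := by
  rw [ContinuousLinearMap.le_def, ← map_sub] at h
  have h2 := h.inner_nonneg_left 1
  rw [alg_eq] at h2
  simp only [ContinuousLinearMap.smul_apply, ContinuousLinearMap.one_apply,
    inner_smul_left, Complex.conj_ofReal, RCLike.re_to_complex] at h2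
  replace h2 := (Complex.nonneg_iff.mp h2).1
  rw [Complex.re_ofReal_mul] at h2
  have h3 : (inner ℂ (1:ℂ) (1:ℂ) : ℂ).re = 1 := by
    simp [RCLike.inner_apply]
  rw [h3] at h2
  linarith

lemma mono_of_opmono (f : ℝ≥0 → ℝ≥0) (hm : IsOperatorMonotoneNN f)
    {x y : ℝ≥0} (h : x ≤ y) : f x ≤ f y := by
  have key := hm ℂ (algebraMap ℝ _ (x:ℝ)) (algebraMap ℝ _ (y:ℝ))
    (sa_algebraMap _) (sa_algebraMap _)
    (fun t ht => by
      have := CFC.spectrum_algebraMap_subset (A := ℂ →L[ℂ] ℂ) (x:ℝ) ht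
      simp only [Set.mem_singleton_iff] at this
      simp [this])
    (fun t ht => by
      have := CFC.spectrum_algebraMap_subset (A := ℂ →L[ℂ] ℂ) (y:ℝ) ht
      simp only [Set.mem_singleton_iff] at this
      simp [this])
    (alg_le _ _ (by exact_mod_cast h))
  rw [cfc_algebraMap, cfc_algebraMap] at key
  have := alg_le_iff _ _ key
  simpa using this

end Mono

section TwoDim

abbrev K2 : Type := EuclideanSpace ℂ (Fin 2)

noncomputable def ee (i : Fin 2) : K2 := EuclideanSpace.single i 1

noncomputable def vv (c s : ℝ) : K2 := (c:ℂ) • ee 0 + (s:ℂ) • ee 1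

lemma vv_apply (c s : ℝ) : vv c s 0 = (c:ℂ) ∧ vv c s 1 = (s:ℂ) := by
  constructor <;> simp [vv, ee, EuclideanSpace.single_apply]

lemma inner_vv (c s : ℝ) (w : K2) : (inner ℂ (vv c s) w : ℂ) = c * w 0 + s * w 1 := by
  simp [vv, inner_add_left, inner_smul_left, EuclideanSpace.inner_single_left, ee,
    Complex.conj_ofReal]

lemma inner_self_K2 (w : K2) : (inner ℂ w w : ℂ) =
    Complex.normSq (w 0) + Complex.normSq (w 1) := by
  rw [PiLp.inner_apply, Fin.sum_univ_two]
  simp only [RCLike.inner_apply]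
  rw [mul_comm (w 0), mul_comm (w 1), ← Complex.normSq_eq_conj_mul_self, ← Complex.normSq_eq_conj_mul_self]

lemma ee_apply01 : (ee 0) 0 = 1 ∧ (ee 0) 1 = 0 ∧ (ee 1) 0 = 0 ∧ (ee 1) 1 = 1 := by
  refine ⟨?_, ?_, ?_, ?_⟩ <;> simp [ee, EuclideanSpace.single_apply]

lemma rc_coe (r : ℝ) : (RCLike.ofReal r : ℂ) = Complex.ofReal r := rfl

lemma main_two_dim (f : ℝ≥0 → ℝ≥0) (hc : Continuous f) (hm : IsOperatorMonotoneNN f)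
    (h1 : f 1 = 0) (hf0 : f 0 = 0) (x : ℝ) (hx : 1 ≤ x) : f x.toNNReal = 0 := by
  set g : ℝ → ℝ := fun t => (f t.toNNReal : ℝ) with hg_def
  have hg : Continuous g := by
    exact NNReal.continuous_coe.comp (hc.comp continuous_real_toNNReal)
  have hg0 : g 0 = 0 := by simp [hg_def, hf0]
  have hg1 : g 1 = 0 := by simp [hg_def, h1]
  have hgx : 0 ≤ g x := by simp [hg_def]
  have hx0 : (0:ℝ) < x := by linarith
  set ε : ℝ := (2*x)⁻¹ with hε_def
  have hε0 : 0 < ε := by positivity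
  have h2xε : 2*x*ε = 1 := mul_inv_cancel₀ (by positivity)
  have hε1 : ε ≤ 1/2 := by
    rw [hε_def]
    rw [show (1:ℝ)/2 = 2⁻¹ by norm_num]
    exact inv_anti₀ (by norm_num) (by linarith)
  set s : ℝ := Real.sqrt ε with hs_def
  set c : ℝ := Real.sqrt (1-ε) with hc_def
  have hs2 : s^2 = ε := Real.sq_sqrt hε0.le
  have hc2 : c^2 = 1-ε := Real.sq_sqrt (by linarith)
  have hs0 : 0 ≤ s := Real.sqrt_nonneg _
  have hc0 : 0 ≤ c := Real.sqrt_nonneg _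
  set v : K2 := vv c s with hv_def
  have hvv1 : (inner ℂ v v : ℂ) = 1 := by
    rw [hv_def, inner_vv, (vv_apply c s).1, (vv_apply c s).2]
    have : c*c + s*s = 1 := by nlinarith [hs2, hc2]
    push_cast
    rw [← Complex.ofReal_mul, ← Complex.ofReal_mul, ← Complex.ofReal_add, this]
    norm_num
  have hee1 : (inner ℂ (ee 0) (ee 0) : ℂ) = 1 := by
    simp [ee, EuclideanSpace.inner_single_left, EuclideanSpace.single_apply]
  set P : K2 →L[ℂ] K2 := rkProj v with hP_def
  set Q : K2 →L[ℂ] K2 := rkProj (ee 0) with hQ_def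
  have saP : IsSelfAdjoint P := rkProj_sa v
  have saQ : IsSelfAdjoint Q := rkProj_sa (ee 0)
  have idemP : P * P = P := rkProj_idem v hvv1
  have idemQ : Q * Q = Q := rkProj_idem (ee 0) hee1
  set A : K2 →L[ℂ] K2 := (x - 0) • P + (0:ℝ) • 1 with hA_def
  set B : K2 →L[ℂ] K2 := (2*x - 1) • Q + (1:ℝ) • 1 with hB_def
  have saA : IsSelfAdjoint A := sa_comb _ _ P saP
  have saB : IsSelfAdjoint B := sa_comb _ _ Q saQ
  -- inner ℂ product formulas
  have hA_inner : ∀ w : K2, (inner ℂ (A w) w : ℂ) =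
      ((x * Complex.normSq ((c:ℂ) * w 0 + (s:ℂ) * w 1) : ℝ) : ℂ) := by
    intro w
    rw [hA_def]
    simp only [ContinuousLinearMap.add_apply, ContinuousLinearMap.smul_apply,
      ContinuousLinearMap.one_apply, sub_zero, zero_smul, add_zero]
    rw [hP_def, rkProj_apply, RCLike.real_smul_eq_coe_smul (K := ℂ), inner_smul_left,
      inner_smul_left, RCLike.conj_ofReal, hv_def, inner_vv]
    rw [← Complex.normSq_eq_conj_mul_self]
    simp only [rc_coe]
    push_cast
    ring
  have hB_inner : ∀ w : K2, (inner ℂ (B w) w : ℂ) =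
      (((2*x-1) * Complex.normSq (w 0) + (Complex.normSq (w 0) + Complex.normSq (w 1)) : ℝ) : ℂ) := by
    intro w
    rw [hB_def]
    simp only [ContinuousLinearMap.add_apply, ContinuousLinearMap.smul_apply,
      ContinuousLinearMap.one_apply, one_smul]
    rw [inner_add_left, hQ_def, rkProj_apply, RCLike.real_smul_eq_coe_smul (K := ℂ),
      inner_smul_left, inner_smul_left, RCLike.conj_ofReal, inner_self_K2]
    have he0w : (inner ℂ (ee 0) w : ℂ) = w 0 := by
      simp [ee, EuclideanSpace.inner_single_left]
    rw [he0w, ← Complex.normSq_eq_conj_mul_self]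
    simp only [rc_coe]
    push_cast
    ring
  -- A ≤ B
  have hle : A ≤ B := by
    rw [ContinuousLinearMap.le_def]
    refine ⟨ContinuousLinearMap.isSelfAdjoint_iff_isSymmetric.mp (saB.sub saA), fun w => ?_⟩
    change 0 ≤ RCLike.re (inner ℂ ((B - A) w) w : ℂ)
    rw [ContinuousLinearMap.sub_apply, inner_sub_left, hA_inner w, hB_inner w,
      ← Complex.ofReal_sub]
    rw [RCLike.re_to_complex, Complex.ofReal_re]
    set u0 : ℝ := ‖w 0‖ with hu0
    set u1 : ℝ := ‖w 1‖ with hu1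
    have hnsq0 : Complex.normSq (w 0) = u0^2 := by rw [hu0, ← Complex.sq_norm]
    have hnsq1 : Complex.normSq (w 1) = u1^2 := by rw [hu1, ← Complex.sq_norm]
    set z : ℂ := (c:ℂ) * w 0 + (s:ℂ) * w 1 with hz_def
    have habs : ‖z‖ ≤ c * u0 + s * u1 := by
      calc ‖z‖ ≤ ‖(c:ℂ) * w 0‖ + ‖(s:ℂ) * w 1‖ :=
            norm_add_le _ _
        _ = c * u0 + s * u1 := by
            rw [norm_mul, norm_mul, Complex.norm_real, Complex.norm_real,
              Real.norm_of_nonneg hc0, Real.norm_of_nonneg hs0, hu0, hu1]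
    have hnz : Complex.normSq z = (‖z‖)^2 := (Complex.sq_norm z).symm
    have hz2 : (‖z‖)^2 ≤ (c*u0 + s*u1)^2 := by
      apply pow_le_pow_left₀ (norm_nonneg z) habs
    have h2' : (c*u0+s*u1)^2 ≤ 2*c^2*u0^2 + 2*s^2*u1^2 := by
      nlinarith [sq_nonneg (c*u0 - s*u1)]
    have h3' : x * (2*c^2*u0^2 + 2*s^2*u1^2) = (2*x-1)*u0^2 + u1^2 := by
      rw [hc2, hs2]
      linear_combination (u1^2 - u0^2) * h2xε
    have key : x * Complex.normSq z ≤ (2*x-1)*u0^2 + (u0^2 + u1^2) := by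
      rw [hnz]
      have step1 : x * (‖z‖)^2 ≤ x * (2*c^2*u0^2 + 2*s^2*u1^2) := by
        apply mul_le_mul_of_nonneg_left _ hx0.le
        linarith
      nlinarith [sq_nonneg u0]
    rw [hnsq0, hnsq1]
    linarith
  -- positivity hence spectra in [0, ∞)
  have hApos : (0 : K2 →L[ℂ] K2) ≤ A := by
    rw [ContinuousLinearMap.nonneg_iff_isPositive]
    refine ⟨ContinuousLinearMap.isSelfAdjoint_iff_isSymmetric.mp saA, fun w => ?_⟩
    change 0 ≤ RCLike.re (inner ℂ (A w) w : ℂ)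
    rw [hA_inner w, RCLike.re_to_complex, Complex.ofReal_re]
    exact mul_nonneg hx0.le (Complex.normSq_nonneg _)
  have hBpos : (0 : K2 →L[ℂ] K2) ≤ B := by
    rw [ContinuousLinearMap.nonneg_iff_isPositive]
    refine ⟨ContinuousLinearMap.isSelfAdjoint_iff_isSymmetric.mp saB, fun w => ?_⟩
    change 0 ≤ RCLike.re (inner ℂ (B w) w : ℂ)
    rw [hB_inner w, RCLike.re_to_complex, Complex.ofReal_re]
    have h' : (0:ℝ) ≤ 2*x - 1 := by linarith
    have n0 := Complex.normSq_nonneg (w 0)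
    have n1 := Complex.normSq_nonneg (w 1)
    nlinarith
  have specA : spectrum ℝ A ⊆ Set.Ici (0:ℝ) := fun t ht =>
    spectrum_nonneg_of_nonneg hApos ht
  have specB : spectrum ℝ B ⊆ Set.Ici (0:ℝ) := fun t ht =>
    spectrum_nonneg_of_nonneg hBpos ht
  -- apply operator monotonicity
  have key := hm K2 A B saA saB specA specB hle
  rw [hA_def, hB_def] at key
  rw [cfc_two_point x 0 P saP idemP g hg, cfc_two_point (2*x) 1 Q saQ idemQ g hg] at key
  rw [hg0, hg1] at key
  simp only [sub_zero, zero_smul, add_zero] at key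
  -- evaluate at ee 1
  have hpos := ((ContinuousLinearMap.le_def _ _).mp key).inner_nonneg_left (ee 1)
  have hQe1 : Q (ee 1) = 0 := by
    rw [hQ_def, rkProj_apply]
    have : (inner ℂ (ee 0) (ee 1) : ℂ) = 0 := by
      simp [ee, EuclideanSpace.inner_single_left, EuclideanSpace.single_apply]
    rw [this, zero_smul]
  have hPe1 : P (ee 1) = (s:ℂ) • v := by
    rw [hP_def, rkProj_apply, hv_def, inner_vv, ee_apply01.2.2.1, ee_apply01.2.2.2]
    norm_num
  have heval : (inner ℂ ((g (2*x) • Q - g x • P) (ee 1)) (ee 1) : ℂ) = ((-(g x * ε) : ℝ) : ℂ) := by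
    rw [ContinuousLinearMap.sub_apply, ContinuousLinearMap.smul_apply,
      ContinuousLinearMap.smul_apply, hQe1, hPe1, smul_zero, zero_sub, inner_neg_left]
    rw [RCLike.real_smul_eq_coe_smul (K := ℂ), smul_smul, inner_smul_left, hv_def, inner_vv,
      ee_apply01.2.2.1, ee_apply01.2.2.2]
    have hss : (s:ℂ) * (s:ℂ) = ((ε:ℝ):ℂ) := by
      have hss' : s * s = ε := by nlinarith [hs2]
      exact_mod_cast congrArg Complex.ofReal hss'
    simp only [rc_coe, map_mul, Complex.conj_ofReal, mul_zero, zero_add, mul_one]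
    rw [mul_assoc, hss]
    push_cast
    ring
  rw [heval] at hpos
  rw [Complex.zero_le_real] at hpos
  have hgx0 : g x ≤ 0 := by nlinarith
  have hfin : g x = 0 := le_antisymm hgx0 hgx
  have h0 : (f x.toNNReal : ℝ) = 0 := hfin
  exact_mod_cast h0

end TwoDim

/-- a continuous operator monotone function `f : [0,∞) → [0,∞)` with
`f(1) = 0` is identically zero. -/
theorem stmt_8 (f : ℝ≥0 → ℝ≥0) (hc : Continuous f) (hm : IsOperatorMonotoneNN f)
    (h1 : f 1 = 0) : ∀ x : ℝ≥0, f x = 0 := by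
  intro x
  have hf0 : f 0 = 0 := by
    have := mono_of_opmono f hm (zero_le : (0:ℝ≥0) ≤ 1)
    rw [h1] at this
    exact le_antisymm this zero_le
  by_cases hx : x ≤ 1
  · have := mono_of_opmono f hm hx
    rw [h1] at this
    exact le_antisymm this zero_le
  · push_neg at hx
    have hx' : (1:ℝ) ≤ (x:ℝ) := by exact_mod_cast hx.le
    have := main_two_dim f hc hm h1 hf0 (x:ℝ) hx'
    rwa [Real.toNNReal_coe] at this
end

section
/- Let σ be a connection on B(H)⁺, where H is a nontrivial complex Hilbert space. The following are equivalent: (i) σ is a mean; (ii) ‖σ‖ = 1, where ‖σ‖ = sup{‖σ(A,B)‖ : A, B positive with ‖A‖ = ‖B‖ = 1}; (iii) ‖σ(A,A)‖ = ‖A‖ for every positive operator A; (iv) ‖σ(A,A)‖ = ‖A‖ for some positive invertible operator A. -/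
open scoped NNReal

set_option synthInstance.maxHeartbeats 1000000
set_option maxHeartbeats 1000000

variable {H : Type} [NormedAddCommGroup H] [InnerProductSpace ℂ H] [CompleteSpace H]

namespace Stmt10Aux

open ContinuousLinearMap Submodule

/-- Conjugation by a selfadjoint operator is monotone. -/
lemma conj_le {X Y C : H →L[ℂ] H} (hC : IsSelfAdjoint C) (h : X ≤ Y) :
    C * X * C ≤ C * Y * C := by
  simpa [hC.star_eq] using star_left_conjugate_le_conjugate h C

lemma isPositive_iff' (A : H →L[ℂ] H) : A.IsPositive ↔ 0 ≤ A :=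
  (nonneg_iff_isPositive A).symm

lemma conj_isPositive {A : H →L[ℂ] H} (hA : A.IsPositive) {C : H →L[ℂ] H}
    (hC : IsSelfAdjoint C) : (C * A * C).IsPositive := by
  rw [isPositive_iff'] at hA ⊢
  have := star_left_conjugate_nonneg hA C
  rwa [hC.star_eq] at this

/-- positive of real-scalar multiple -/
lemma smul_isPositive {A : H →L[ℂ] H} (hA : A.IsPositive) {s : ℝ} (hs : 0 ≤ s) :
    (s • A).IsPositive := by
  refine ⟨isSelfAdjoint_iff_isSymmetric.mp (IsSelfAdjoint.smul (star_trivial s) hA.isSelfAdjoint), fun v => ?_⟩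
  have : (s • A) v = s • (A v) := by simp
  rw [reApplyInnerSelf, this, RCLike.real_smul_eq_coe_smul (K := ℂ), inner_smul_real_left,
    RCLike.smul_re]
  exact mul_nonneg hs (hA.2 v)

lemma isUnit_add_smul_one {A : H →L[ℂ] H} (hA : A.IsPositive) {e : ℝ} (he : 0 < e) :
    IsUnit (A + e • 1) := by
  apply isUnit_of_forall_le_norm_inner_map _ (c := ⟨e, he.le⟩) he
  intro x
  calc ‖x‖ ^ 2 * e ≤ RCLike.re (inner ℂ ((A + e • 1) x) x : ℂ) := by
        simp only [add_apply, smul_apply, one_apply, inner_add_left, map_add]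
        rw [RCLike.real_smul_eq_coe_smul (K := ℂ), inner_smul_real_left, RCLike.smul_re,
          ContinuousLinearMap.one_apply, inner_self_eq_norm_sq]
        nlinarith [hA.re_inner_nonneg_left x]
    _ ≤ ‖(inner ℂ ((A + e • 1) x) x : ℂ)‖ := RCLike.re_le_norm _

lemma isUnit_sqrt {A : H →L[ℂ] H} (hA : 0 ≤ A) (hu : IsUnit A) : IsUnit (CFC.sqrt A) := by
  have h : CFC.sqrt A * CFC.sqrt A = A := CFC.sqrt_mul_sqrt_self A hA
  exact ((Commute.refl (CFC.sqrt A)).isUnit_mul_iff.mp (h.symm ▸ hu)).1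

lemma inner_sa {P : H →L[ℂ] H} (hsa : IsSelfAdjoint P) (x y : H) :
    (inner ℂ (P x) y : ℂ) = inner ℂ x (P y) := by
  conv_lhs => rw [← hsa.adjoint_eq]
  exact ContinuousLinearMap.adjoint_inner_left P y x

lemma pos_of_sa_idem {P : H →L[ℂ] H} (hsa : IsSelfAdjoint P) (hidem : P * P = P) :
    (0 : H →L[ℂ] H) ≤ P := by
  refine (nonneg_iff_isPositive P).mpr ⟨isSelfAdjoint_iff_isSymmetric.mp hsa, fun w => ?_⟩
  have h1 : P w = P (P w) := by
    conv_lhs => rw [← hidem]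
    rfl
  rw [reApplyInnerSelf_apply, h1, inner_sa hsa (P w) w]
  exact inner_self_nonneg

lemma apply_eq_zero_of_inner_zero {X : H →L[ℂ] H} (hX : 0 ≤ X) {v : H}
    (h : RCLike.re (inner ℂ (X v) v : ℂ) = 0) : X v = 0 := by
  set S := CFC.sqrt X with hSdef
  have hS : (0 : H →L[ℂ] H) ≤ S := CFC.sqrt_nonneg _
  have hSS : S * S = X := CFC.sqrt_mul_sqrt_self X hX
  have hSsa : IsSelfAdjoint S := IsSelfAdjoint.of_nonneg hS
  have h1 : X v = S (S v) := by rw [← hSS]; rfl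
  have h2 : RCLike.re (inner ℂ (S (S v)) v : ℂ) = ‖S v‖ ^ 2 := by
    rw [inner_sa hSsa (S v) v, inner_self_eq_norm_sq]
  rw [h1] at h
  have h3 : S v = 0 := by
    rw [h2] at h
    simpa using pow_eq_zero_iff (n := 2) (by norm_num) |>.mp h
  rw [h1, h3, map_zero]

/-- Transformer equality for invertible positive C. -/
lemma transformer_eq {σ : (H →L[ℂ] H) → (H →L[ℂ] H) → (H →L[ℂ] H)} (hσ : IsConnection σ)
    {A B C : H →L[ℂ] H} (hA : A.IsPositive) (hB : B.IsPositive) (hC : C.IsPositive)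
    (hu : IsUnit C) : C * σ A B * C = σ (C * A * C) (C * B * C) := by
  obtain ⟨u, hu'⟩ := hu
  have hC0 : (0 : H →L[ℂ] H) ≤ C := (isPositive_iff' C).mp hC
  have hCsa : IsSelfAdjoint C := hC.isSelfAdjoint
  have hD0 : (0 : H →L[ℂ] H) ≤ ↑u⁻¹ := by
    rw [← CFC.rpow_neg_one_eq_inv u (by rw [hu']; exact hC0)]
    exact CFC.rpow_nonneg
  have hDsa : IsSelfAdjoint ((↑u⁻¹ : H →L[ℂ] H)) := IsSelfAdjoint.of_nonneg hD0
  refine le_antisymm (hσ.transformer A B C hA hB hC) ?_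
  have h2 := hσ.transformer (C * A * C) (C * B * C) (↑u⁻¹)
    (conj_isPositive hA hCsa) (conj_isPositive hB hCsa) ((isPositive_iff' _).mpr hD0)
  have hDC : (↑u⁻¹ : H →L[ℂ] H) * C = 1 := by rw [← hu']; exact u.inv_mul
  have hCD : C * (↑u⁻¹ : H →L[ℂ] H) = 1 := by rw [← hu']; exact u.mul_inv
  have hsimp : ∀ Z : H →L[ℂ] H, (↑u⁻¹ : H →L[ℂ] H) * (C * Z * C) * ↑u⁻¹ = Z := by
    intro Z
    calc (↑u⁻¹ : H →L[ℂ] H) * (C * Z * C) * ↑u⁻¹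
        = ((↑u⁻¹ : H →L[ℂ] H) * C) * Z * (C * ↑u⁻¹) := by simp only [mul_assoc]
      _ = Z := by rw [hDC, hCD, one_mul, mul_one]
  rw [hsimp A, hsimp B] at h2
  have h3 := conj_le hCsa h2
  calc σ (C * A * C) (C * B * C)
      = C * ((↑u⁻¹ : H →L[ℂ] H) * σ (C * A * C) (C * B * C) * ↑u⁻¹) * C := by
        rw [show ∀ Z : H →L[ℂ] H, C * ((↑u⁻¹ : H →L[ℂ] H) * Z * ↑u⁻¹) * C
            = (C * ↑u⁻¹) * Z * ((↑u⁻¹ : H →L[ℂ] H) * C) from fun Z => by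
              simp only [mul_assoc], hCD, hDC,
          one_mul, mul_one]
    _ ≤ C * σ A B * C := h3

lemma exists_smul_of_mem_span [Nontrivial H] {T : H →L[ℂ] H}
    (h : ∀ x : H, T x ∈ (ℂ ∙ x)) : ∃ c : ℂ, T = c • 1 := by
  have h' : ∀ x : H, ∃ c : ℂ, T x = c • x := by
    intro x
    obtain ⟨c, hc⟩ := Submodule.mem_span_singleton.mp (h x)
    exact ⟨c, hc.symm⟩
  obtain ⟨x₀, hx₀⟩ := exists_ne (0 : H)
  obtain ⟨c₀, hc₀⟩ := h' x₀
  refine ⟨c₀, ContinuousLinearMap.ext fun y => ?_⟩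
  simp only [ContinuousLinearMap.smul_apply, ContinuousLinearMap.one_apply]
  rcases eq_or_ne y 0 with rfl | hy
  · simp
  obtain ⟨cy, hcy⟩ := h' y
  obtain ⟨cs, hcs⟩ := h' (x₀ + y)
  have hsum : cs • x₀ + cs • y = c₀ • x₀ + cy • y := by
    rw [← smul_add, ← hcs, map_add, hc₀, hcy]
  have key : (cs - c₀) • x₀ = (cy - cs) • y := by
    rw [sub_smul, sub_smul]
    rw [sub_eq_sub_iff_add_eq_add]
    linear_combination (norm := module) hsum
  rcases eq_or_ne cs c₀ with hcc | hcc
  · have : (cy - cs) • y = 0 := by rw [← key, hcc, sub_self, zero_smul]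
    have : cy = cs := by
      rcases smul_eq_zero.mp this with h1 | h1
      · exact sub_eq_zero.mp h1
      · exact absurd h1 hy
    rw [hcy, this, hcc]
  · set d : ℂ := (cs - c₀)⁻¹ * (cy - cs) with hddef
    have hd : x₀ = d • y := by
      have h4 : x₀ = (cs - c₀)⁻¹ • ((cs - c₀) • x₀) := by
        rw [smul_smul, inv_mul_cancel₀ (sub_ne_zero.mpr hcc), one_smul]
      rw [h4, key, smul_smul]
    have hdne : d ≠ 0 := by
      intro h0
      rw [h0, zero_smul] at hd
      exact hx₀ hd
    have h1 : T x₀ = (d * cy) • y := by rw [hd, map_smul, hcy, smul_smul]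
    have h2 : T x₀ = (c₀ * d) • y := by rw [hc₀, hd, smul_smul]
    have h5 : d * cy = c₀ * d := smul_left_injective ℂ hy (h1.symm.trans h2)
    have hcyc : cy = c₀ := mul_left_cancel₀ hdne (h5.trans (mul_comm c₀ d))
    rw [hcy, hcyc]

lemma smul_nonneg' {A : H →L[ℂ] H} (hA : 0 ≤ A) {s : ℝ} (hs : 0 ≤ s) :
    (0 : H →L[ℂ] H) ≤ s • A :=
  (isPositive_iff' _).mp (smul_isPositive ((isPositive_iff' A).mpr hA) hs)

lemma re_inner_smul_apply (c : ℝ) (A : H →L[ℂ] H) (v : H) :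
    RCLike.re (inner ℂ ((c • A) v) v : ℂ) = c * RCLike.re (inner ℂ (A v) v : ℂ) := by
  have : (c • A) v = c • (A v) := by simp
  rw [this, RCLike.real_smul_eq_coe_smul (K := ℂ), inner_smul_real_left, RCLike.smul_re]

/-- `σ 1 1` is a nonnegative real multiple of the identity. -/
lemma sigma_one_one_scalar [Nontrivial H] {σ : (H →L[ℂ] H) → (H →L[ℂ] H) → (H →L[ℂ] H)}
    (hσ : IsConnection σ) : ∃ α : ℝ, 0 ≤ α ∧ σ 1 1 = α • 1 := by
  set T : H →L[ℂ] H := σ 1 1 with hTdef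
  have hT : T.IsPositive := hσ.isPositive 1 1 isPositive_one isPositive_one
  have hTsa : IsSelfAdjoint T := hT.isSelfAdjoint
  -- Step 1: T maps every vector into its span
  have hmem : ∀ x : H, T x ∈ (ℂ ∙ x) := by
    intro x
    set U : Submodule ℂ H := ℂ ∙ x with hUdef
    set P : H →L[ℂ] H := U.subtypeL ∘L orthogonalProjection U with hPdef
    have hPsa : IsSelfAdjoint P := isSelfAdjoint_starProjection U
    have hPmem : ∀ w, P w ∈ U := fun w => SetLike.coe_mem _
    have hPapply : ∀ w ∈ U, P w = w := by
      intro w hw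
      simp [hPdef, Submodule.starProjection_eq_self_iff.mpr hw]
    have hPP : P * P = P := by
      ext w
      exact hPapply (P w) (hPmem w)
    set Q : H →L[ℂ] H := 1 - P with hQdef
    have hQsa : IsSelfAdjoint Q := (IsSelfAdjoint.one _).sub hPsa
    have hPQ : P * Q = 0 := by rw [hQdef, mul_sub, mul_one, hPP, sub_self]
    have hQP : Q * P = 0 := by rw [hQdef, sub_mul, one_mul, hPP, sub_self]
    have hQQ : Q * Q = Q := by rw [hQdef, sub_mul, one_mul, mul_sub, mul_one, hPP, sub_self,
      sub_zero]
    have hP0 : (0 : H →L[ℂ] H) ≤ P := pos_of_sa_idem hPsa hPP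
    have hQ0 : (0 : H →L[ℂ] H) ≤ Q := pos_of_sa_idem hQsa hQQ
    have hPQ1 : P + Q = 1 := by rw [hQdef]; abel
    set Cs : ℝ → H →L[ℂ] H := fun s => P + s • Q with hCsdef
    have hC0 : ∀ s : ℝ, 0 ≤ s → (0 : H →L[ℂ] H) ≤ Cs s := fun s hs =>
      add_nonneg hP0 (smul_nonneg' hQ0 hs)
    have hCpos : ∀ s : ℝ, 0 ≤ s → (Cs s).IsPositive := fun s hs =>
      (isPositive_iff' _).mpr (hC0 s hs)
    have hprod : ∀ a b : ℝ, Cs a * Cs b = P + (a * b) • Q := by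
      intro a b
      simp only [hCsdef, add_mul, mul_add, hPP, mul_smul_comm, smul_mul_assoc, hPQ, hQP, hQQ,
        smul_smul, smul_zero, add_zero, zero_add, mul_comm b a]
    have hunit : ∀ s : ℝ, 0 < s → IsUnit (Cs s) := by
      intro s hs
      refine isUnit_iff_exists.mpr ⟨Cs s⁻¹, ?_, ?_⟩
      · rw [hprod, mul_inv_cancel₀ hs.ne', one_smul, hPQ1]
      · rw [hprod, inv_mul_cancel₀ hs.ne', one_smul, hPQ1]
    have htrans : ∀ s : ℝ, 0 < s → Cs s * T * Cs s = σ (P + (s * s) • Q) (P + (s * s) • Q) := by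
      intro s hs
      have h := transformer_eq hσ isPositive_one isPositive_one (hCpos s hs.le) (hunit s hs)
      rw [mul_one, hprod] at h
      rw [hTdef]
      exact h
    have hposPQ : ∀ s : ℝ, 0 ≤ s → (P + s • Q).IsPositive := fun s hs =>
      (isPositive_iff' _).mpr (add_nonneg hP0 (smul_nonneg' hQ0 hs))
    have hmono : ∀ s t : ℝ, 0 < s → s ≤ t → Cs s * T * Cs s ≤ Cs t * T * Cs t := by
      intro s t hs hst
      rw [htrans s hs, htrans t (hs.trans_le hst)]
      have hle : P + (s * s) • Q ≤ P + (t * t) • Q := by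
        have h1 : (0 : H →L[ℂ] H) ≤ (t * t - s * s) • Q :=
          smul_nonneg' hQ0 (by nlinarith)
        calc P + (s * s) • Q ≤ P + (s * s) • Q + (t * t - s * s) • Q :=
              le_add_of_nonneg_right h1
          _ = P + (t * t) • Q := by rw [add_assoc, ← add_smul, add_sub_cancel]
      exact hσ.mono _ _ _ _ (hposPQ _ (mul_nonneg hs.le hs.le))
        (hposPQ _ (mul_nonneg hs.le hs.le))
        (hposPQ _ (by nlinarith)) (hposPQ _ (by nlinarith)) hle hle
    set X : H →L[ℂ] H := P * T * Q + Q * T * P with hXdef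
    set R : H →L[ℂ] H := Q * T * Q with hRdef
    have hexp : ∀ s : ℝ, Cs s * T * Cs s = P * T * P + s • X + (s * s) • R := by
      intro s
      simp only [hCsdef, hXdef, hRdef, add_mul, mul_add, smul_mul_assoc, mul_smul_comm,
        smul_smul, smul_add]
      abel
    have hRpos : R.IsPositive := by
      rw [hRdef]
      exact conj_isPositive hT hQsa
    have hXsa : IsSelfAdjoint X := by
      rw [hXdef, IsSelfAdjoint, star_add, star_mul, star_mul, star_mul, star_mul,
        hPsa.star_eq, hQsa.star_eq, hTsa.star_eq]
      rw [add_comm]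
      simp [mul_assoc]
    have hvineq : ∀ v : H, ∀ n : ℕ, 0 ≤ RCLike.re (inner ℂ (X v) v : ℂ) +
        3 / 2 * (1 / ((n : ℝ) + 1)) * RCLike.re (inner ℂ (R v) v : ℂ) := by
      intro v n
      set t : ℝ := 1 / ((n : ℝ) + 1) with htdef
      have ht : 0 < t := by positivity
      have h1 := hmono (t / 2) t (by positivity) (by linarith)
      rw [hexp, hexp] at h1
      have h2 := sub_nonneg.mpr h1
      have h3 : P * T * P + t • X + (t * t) • R - (P * T * P + (t / 2) • X +
          (t / 2 * (t / 2)) • R) = (t / 2) • X + (3 / 4 * (t * t)) • R := by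
        module
      rw [h3] at h2
      have h4 := ((isPositive_iff' _).mpr h2).2 v
      rw [reApplyInnerSelf_apply] at h4
      have h5 : (((t / 2) • X + (3 / 4 * (t * t)) • R) v) = ((t / 2) • X) v +
          ((3 / 4 * (t * t)) • R) v := by simp
      rw [h5, inner_add_left, map_add, re_inner_smul_apply, re_inner_smul_apply] at h4
      nlinarith [h4, hRpos.2 v, ht]
    have hXpos : X.IsPositive := by
      refine ⟨isSelfAdjoint_iff_isSymmetric.mp hXsa, fun v => ?_⟩
      rw [reApplyInnerSelf_apply]
      have h0 : Filter.Tendsto (fun n : ℕ => (1 / ((n : ℝ) + 1))) Filter.atTop (nhds 0) :=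
        tendsto_one_div_add_atTop_nhds_zero_nat
      have hlim : Filter.Tendsto (fun n : ℕ => RCLike.re (inner ℂ (X v) v : ℂ) +
          3 / 2 * (1 / ((n : ℝ) + 1)) * RCLike.re (inner ℂ (R v) v : ℂ)) Filter.atTop
          (nhds (RCLike.re (inner ℂ (X v) v : ℂ) +
            3 / 2 * 0 * RCLike.re (inner ℂ (R v) v : ℂ))) :=
        Filter.Tendsto.add tendsto_const_nhds
          ((h0.const_mul (3/2 : ℝ)).mul_const (RCLike.re (inner ℂ (R v) v : ℂ)))
      have heq : RCLike.re (inner ℂ (X v) v : ℂ) + 3 / 2 * 0 * RCLike.re (inner ℂ (R v) v : ℂ)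
          = RCLike.re (inner ℂ (X v) v : ℂ) := by ring
      rw [heq] at hlim
      exact ge_of_tendsto' hlim (hvineq v)
    have hXP1 : X * P = Q * T * P := by
      rw [hXdef, add_mul, mul_assoc (P * T) Q P, hQP, mul_zero, mul_assoc (Q * T) P P, hPP,
        zero_add]
    have hPXP : P * (X * P) = 0 := by
      rw [hXP1, ← mul_assoc, ← mul_assoc, hPQ, zero_mul, zero_mul]
    have hXPw : ∀ w : H, X (P w) = 0 := by
      intro w
      apply apply_eq_zero_of_inner_zero ((isPositive_iff' X).mp hXpos)
      have h6 : (inner ℂ (X (P w)) (P w) : ℂ) = inner ℂ (P (X (P w))) w :=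
        (inner_sa hPsa (X (P w)) w).symm
      have h7 : P (X (P w)) = (P * (X * P)) w := rfl
      rw [h6, h7, hPXP]
      simp
    have hQTP : Q * T * P = 0 := by
      rw [← hXP1]
      ext w
      exact hXPw w
    have hTP : T * P = P * (T * P) := by
      conv_lhs => rw [← one_mul (T * P), ← hPQ1]
      rw [add_mul, ← mul_assoc Q T P, hQTP, add_zero]
    have hPx : P x = x := hPapply x (Submodule.mem_span_singleton_self x)
    have h8 : T x = (T * P) x := by
      have : (T * P) x = T (P x) := rfl
      rw [this, hPx]
    rw [hTP] at h8
    rw [h8]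
    exact hPmem _
  -- Step 2: conclude scalar
  obtain ⟨c, hc⟩ := exists_smul_of_mem_span hmem
  obtain ⟨x₀, hx₀⟩ := exists_ne (0 : H)
  have hcreal : (starRingEnd ℂ) c = c := by
    have h1 : star (c • (1 : H →L[ℂ] H)) = c • 1 := by rw [← hc]; exact hTsa.star_eq
    rw [star_smul, star_one, Complex.star_def] at h1
    have h2 : ((starRingEnd ℂ) c) • x₀ = c • x₀ := by
      calc ((starRingEnd ℂ) c) • x₀ = (((starRingEnd ℂ) c) • (1 : H →L[ℂ] H)) x₀ := by simp
        _ = (c • (1 : H →L[ℂ] H)) x₀ := by rw [h1]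
        _ = c • x₀ := by simp
    exact smul_left_injective ℂ hx₀ h2
  have him : c.im = 0 := Complex.conj_eq_iff_im.mp hcreal
  have hcre : c = (c.re : ℂ) := Complex.ext rfl (by simp [him])
  refine ⟨c.re, ?_, ?_⟩
  · have h3 := hT.2 x₀
    rw [reApplyInnerSelf_apply] at h3
    have h4 : T x₀ = c • x₀ := by rw [hc]; simp
    rw [h4, inner_smul_left, hcreal] at h3
    rw [RCLike.mul_re, inner_self_im, inner_self_eq_norm_sq] at h3
    have h5 : (0:ℝ) < ‖x₀‖ ^ 2 := by
      have := norm_pos_iff.mpr hx₀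
      positivity
    have h7 : RCLike.re c = c.re := rfl
    rw [h7] at h3
    nlinarith
  · rw [hc]
    ext w
    simp only [ContinuousLinearMap.smul_apply, ContinuousLinearMap.one_apply]
    rw [RCLike.real_smul_eq_coe_smul (K := ℂ)]
    congr 1

lemma sigma_self {σ : (H →L[ℂ] H) → (H →L[ℂ] H) → (H →L[ℂ] H)} (hσ : IsConnection σ)
    {α : ℝ} (hT : σ 1 1 = α • 1) {A : H →L[ℂ] H} (hA : A.IsPositive) (hu : IsUnit A) :
    σ A A = α • A := by
  have hA0 : (0 : H →L[ℂ] H) ≤ A := (isPositive_iff' A).mp hA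
  set C : H →L[ℂ] H := CFC.sqrt A with hCdef
  have hC0 : (0 : H →L[ℂ] H) ≤ C := CFC.sqrt_nonneg _
  have hCC : C * C = A := CFC.sqrt_mul_sqrt_self A hA0
  have hCu : IsUnit C := isUnit_sqrt hA0 hu
  have h := transformer_eq hσ isPositive_one isPositive_one ((isPositive_iff' C).mpr hC0) hCu
  rw [mul_one, hCC] at h
  rw [← h, hT]
  ext w
  simp [mul_smul_comm, smul_mul_assoc, ← hCC]

lemma mean_of_one {σ : (H →L[ℂ] H) → (H →L[ℂ] H) → (H →L[ℂ] H)} (hσ : IsConnection σ)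
    (h1 : σ 1 1 = 1) : ∀ A : H →L[ℂ] H, A.IsPositive → σ A A = A := by
  have h1' : σ 1 1 = (1 : ℝ) • 1 := by rw [h1, one_smul]
  have hunit : ∀ A : H →L[ℂ] H, A.IsPositive → IsUnit A → σ A A = A := by
    intro A hA hu
    rw [sigma_self hσ h1' hA hu, one_smul]
  intro A hA
  set An : ℕ → H →L[ℂ] H := fun n => A + (1 / ((n : ℝ) + 1)) • 1 with hAndef
  have hAnpos : ∀ n, (An n).IsPositive := fun n =>
    (isPositive_iff' _).mpr (add_nonneg ((isPositive_iff' A).mp hA)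
      (smul_nonneg' zero_le_one (by positivity)))
  have hAnunit : ∀ n, IsUnit (An n) := fun n => isUnit_add_smul_one hA (by positivity)
  have hdown : DownTo An A := by
    constructor
    · intro n
      have h2 : (0 : H →L[ℂ] H) ≤ (1 / ((n : ℝ) + 1) - 1 / ((n : ℝ) + 2)) • 1 := by
        apply smul_nonneg' zero_le_one
        have h3 : ((n : ℝ) + 1) ≤ ((n : ℝ) + 2) := by linarith
        have h4 : (0:ℝ) < (n : ℝ) + 1 := by positivity
        rw [sub_nonneg]
        exact div_le_div_of_nonneg_left zero_le_one h4 h3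
      calc An (n + 1) ≤ An (n + 1) + (1 / ((n : ℝ) + 1) - 1 / ((n : ℝ) + 2)) • 1 :=
            le_add_of_nonneg_right h2
        _ = An n := by
            rw [hAndef]
            simp only [Nat.cast_add, Nat.cast_one]
            rw [add_assoc, ← add_smul]
            congr 2
            ring
    · intro x
      have h5 : ∀ n : ℕ, An n x = A x + (1 / ((n : ℝ) + 1)) • x := by
        intro n; simp [hAndef]
      simp only [h5]
      have h6 : Filter.Tendsto (fun n : ℕ => (1 / ((n : ℝ) + 1)) • x) Filter.atTop
          (nhds ((0 : ℝ) • x)) :=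
        Filter.Tendsto.smul_const tendsto_one_div_add_atTop_nhds_zero_nat x
      rw [zero_smul] at h6
      simpa using Filter.Tendsto.const_add (A x) h6
  have hcont := hσ.contAbove An An A A hAnpos hAnpos hA hA hdown hdown
  have heq : ∀ n, σ (An n) (An n) = An n := fun n => hunit _ (hAnpos n) (hAnunit n)
  ext x
  have h7 := hcont.2 x
  simp only [heq] at h7
  exact tendsto_nhds_unique h7 (hdown.2 x)

lemma connNorm_eq [Nontrivial H] {σ : (H →L[ℂ] H) → (H →L[ℂ] H) → (H →L[ℂ] H)}
    (hσ : IsConnection σ) : connNorm σ = ‖σ 1 1‖ := by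
  have hmem : ‖σ 1 1‖ ∈ {r : ℝ | ∃ A B : H →L[ℂ] H, A.IsPositive ∧ B.IsPositive ∧
      ‖A‖ = 1 ∧ ‖B‖ = 1 ∧ r = ‖σ A B‖} :=
    ⟨1, 1, isPositive_one, isPositive_one, norm_one, norm_one, rfl⟩
  have hub : ∀ r ∈ {r : ℝ | ∃ A B : H →L[ℂ] H, A.IsPositive ∧ B.IsPositive ∧
      ‖A‖ = 1 ∧ ‖B‖ = 1 ∧ r = ‖σ A B‖}, r ≤ ‖σ 1 1‖ := by
    rintro r ⟨A, B, hA, hB, hA1, hB1, rfl⟩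
    have hle1 : A ≤ 1 := by
      have := hA.isSelfAdjoint.le_algebraMap_norm_self
      rwa [hA1, map_one] at this
    have hle2 : B ≤ 1 := by
      have := hB.isSelfAdjoint.le_algebraMap_norm_self
      rwa [hB1, map_one] at this
    have h3 : σ A B ≤ σ 1 1 := hσ.mono A B 1 1 hA hB isPositive_one isPositive_one hle1 hle2
    exact CStarAlgebra.norm_le_norm_of_nonneg_of_le
      ((isPositive_iff' _).mp (hσ.isPositive A B hA hB)) h3
  exact le_antisymm (csSup_le ⟨_, hmem⟩ hub) (le_csSup ⟨_, hub⟩ hmem)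

end Stmt10Aux


open Stmt10Aux ContinuousLinearMap in
/-- TFAE: (i) `σ` is a mean; (ii) `‖σ‖ = 1`;
(iii) `‖σ(A,A)‖ = ‖A‖` for every positive `A`;
(iv) `‖σ(A,A)‖ = ‖A‖` for some positive invertible `A`. -/
theorem stmt_10 [Nontrivial H] (σ : (H →L[ℂ] H) → (H →L[ℂ] H) → (H →L[ℂ] H))
    (hσ : IsConnection σ) :
    List.TFAE
      [(∀ A : H →L[ℂ] H, A.IsPositive → σ A A = A),
       connNorm σ = 1,
       (∀ A : H →L[ℂ] H, A.IsPositive → ‖σ A A‖ = ‖A‖),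
       (∃ A : H →L[ℂ] H, A.IsPositive ∧ IsUnit A ∧ ‖σ A A‖ = ‖A‖)] := by
  haveI : Nontrivial (H →L[ℂ] H) := by
    refine nontrivial_of_ne 1 0 fun h => ?_
    obtain ⟨x, hx⟩ := exists_ne (0 : H)
    have := ContinuousLinearMap.ext_iff.mp h x
    simp only [one_apply, zero_apply] at this
    exact hx this
  tfae_have 1 → 3 := fun h A hA => by rw [h A hA]
  tfae_have 3 → 4 := fun h => ⟨1, isPositive_one, isUnit_one, h 1 isPositive_one⟩
  tfae_have 1 → 2 := fun h => by rw [connNorm_eq hσ, h 1 isPositive_one, norm_one]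
  tfae_have 2 → 4 := fun h => ⟨1, isPositive_one, isUnit_one, by
    rw [show ‖σ 1 1‖ = connNorm σ from (connNorm_eq hσ).symm, h, norm_one]⟩
  tfae_have 4 → 1 := by
    rintro ⟨A, hA, hAu, hnorm⟩
    obtain ⟨α, hα0, hT⟩ := sigma_one_one_scalar hσ
    have hAA := sigma_self hσ hT hA hAu
    have hAne : ‖A‖ ≠ 0 := by
      intro h0
      rw [norm_eq_zero] at h0
      rw [h0] at hAu
      exact hAu.ne_zero rfl
    have hα1 : α = 1 := by
      rw [hAA, norm_smul, Real.norm_of_nonneg hα0] at hnorm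
      exact mul_right_cancel₀ hAne (by rw [hnorm, one_mul])
    exact mean_of_one hσ (by rw [hT, hα1, one_smul])
  tfae_finish
end

section
/- Let σ be a connection on B(H)⁺, where H is a nontrivial complex Hilbert space, and let f : [0,∞) → [0,∞) satisfy σ(I, xI) = f(x)·I for all x ≥ 0. Then ‖σ‖ = f(1), where ‖σ‖ = sup{‖σ(A,B)‖ : A, B positive with ‖A‖ = ‖B‖ = 1}. -/
open scoped NNReal

variable {H : Type} [NormedAddCommGroup H] [InnerProductSpace ℂ H] [CompleteSpace H]

/-- if `f` is the representing function of `σ`, then `‖σ‖ = f(1)`. -/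
theorem stmt_14 [Nontrivial H] (σ : (H →L[ℂ] H) → (H →L[ℂ] H) → (H →L[ℂ] H))
    (hσ : IsConnection σ) (f : ℝ≥0 → ℝ≥0)
    (hf : ∀ x : ℝ≥0, σ 1 (((x : ℝ) : ℂ) • 1) = ((f x : ℝ) : ℂ) • 1) :
    connNorm σ = f 1 := by
  have h11 : σ 1 1 = ((f 1 : ℝ) : ℂ) • 1 := by simpa using hf 1
  have hn11 : ‖σ 1 1‖ = (f 1 : ℝ) := by
    rw [h11, norm_smul, norm_one, mul_one]
    simp
  have hmem : (f 1 : ℝ) ∈ {r : ℝ | ∃ A B : H →L[ℂ] H, A.IsPositive ∧ B.IsPositive ∧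
      ‖A‖ = 1 ∧ ‖B‖ = 1 ∧ r = ‖σ A B‖} :=
    ⟨1, 1, ContinuousLinearMap.isPositive_one, ContinuousLinearMap.isPositive_one,
      norm_one, norm_one, hn11.symm⟩
  have hub : ∀ r ∈ {r : ℝ | ∃ A B : H →L[ℂ] H, A.IsPositive ∧ B.IsPositive ∧
      ‖A‖ = 1 ∧ ‖B‖ = 1 ∧ r = ‖σ A B‖}, r ≤ (f 1 : ℝ) := by
    rintro r ⟨A, B, hA, hB, hnA, hnB, rfl⟩
    have hA0 : (0 : H →L[ℂ] H) ≤ A := (ContinuousLinearMap.nonneg_iff_isPositive A).mpr hA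
    have hB0 : (0 : H →L[ℂ] H) ≤ B := (ContinuousLinearMap.nonneg_iff_isPositive B).mpr hB
    have hA1 : A ≤ 1 := (CStarAlgebra.norm_le_one_iff_of_nonneg A hA0).mp hnA.le
    have hB1 : B ≤ 1 := (CStarAlgebra.norm_le_one_iff_of_nonneg B hB0).mp hnB.le
    have hle : σ A B ≤ σ 1 1 := hσ.mono A B 1 1 hA hB
      ContinuousLinearMap.isPositive_one ContinuousLinearMap.isPositive_one hA1 hB1
    have h0 : (0 : H →L[ℂ] H) ≤ σ A B :=
      (ContinuousLinearMap.nonneg_iff_isPositive _).mpr (hσ.isPositive A B hA hB)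
    calc ‖σ A B‖ ≤ ‖σ 1 1‖ := CStarAlgebra.norm_le_norm_of_nonneg_of_le h0 hle
    _ = (f 1 : ℝ) := hn11
  exact le_antisymm (csSup_le ⟨_, hmem⟩ hub) (le_csSup ⟨_, hub⟩ hmem)
end
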